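/- In any ontological model for ℂ² with D injective, for every unit vector ψ ∈ ℂ²: ρ₁({λ ∈ Λ : 0 < p_{P_ψ}(λ) < 1}) = 0, where ρ₁ := 2·D⁻¹(½I); that is, with respect to ρ₁, almost every ontic state responds deterministically (with probability 0 or 1) to a measurement of the projection P_ψ. -/

import Mathlib

open MeasureTheory
open scoped NNReal ENNReal ComplexOrder

noncomputable section

/-- The rank-one projection `|ψ⟩⟨ψ|` associated with a vector `ψ ∈ ℂⁿ`. -/
def proj {n : ℕ} (ψ : EuclideanSpace ℂ (Fin n)) : Matrix (Fin n) (Fin n) ℂ :=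
  Matrix.of fun i j => ψ i * (starRingEnd ℂ) (ψ j)

/-- An ontological model for `ℂⁿ`: a measurable space `Λ` of ontic states, a convex set `C`
of preparable probability measures on `Λ`, measurable response functions `p A : Λ → [0,1]`
for each effect `A` (`0 ≤ A ≤ 1` in the Loewner order), and a map `D` from `C` onto the set
of density matrices reproducing the quantum statistics. -/
structure OntModel (n : ℕ) (Λ : Type*) [MeasurableSpace Λ] where
  C : Set (Measure Λ)
  prob : ∀ ρ ∈ C, IsProbabilityMeasure ρ
  convexC : ∀ ρa ∈ C, ∀ ρb ∈ C, ∀ s : ℝ≥0, s ≤ 1 → s • ρa + (1 - s) • ρb ∈ C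
  p : Matrix (Fin n) (Fin n) ℂ → Λ → ℝ
  p_meas : ∀ A, Measurable (p A)
  p_nonneg : ∀ A l, 0 ≤ p A l
  p_le_one : ∀ A l, p A l ≤ 1
  D : Measure Λ → Matrix (Fin n) (Fin n) ℂ
  D_psd : ∀ ρ ∈ C, (D ρ).PosSemidef
  D_trace : ∀ ρ ∈ C, (D ρ).trace = 1
  D_surj : ∀ W : Matrix (Fin n) (Fin n) ℂ, W.PosSemidef → W.trace = 1 → ∃ ρ ∈ C, D ρ = W
  agree : ∀ ρ ∈ C, ∀ A : Matrix (Fin n) (Fin n) ℂ, A.PosSemidef → (1 - A).PosSemidef →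
    ((∫ l, p A l ∂ρ : ℝ) : ℂ) = (D ρ * A).trace

lemma proj_smul_psd {n : ℕ} (c : ℝ) (hc : 0 ≤ c) (v : EuclideanSpace ℂ (Fin n)) :
    ((c : ℂ) • proj v).PosSemidef := by
  refine Matrix.PosSemidef.of_dotProduct_mulVec_nonneg ?_ ?_
  · ext i j
    simp [proj, Matrix.conjTranspose_apply, Matrix.smul_apply, Complex.conj_ofReal, mul_comm]
  · intro x
    set s : ℂ := ∑ j, (starRingEnd ℂ) (v j) * x j with hs
    have hstar : star s = ∑ i, star (x i) * v i := by
      rw [hs, star_sum]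
      refine Finset.sum_congr rfl fun i _ => ?_
      simp only [star_mul', RCLike.star_def, Complex.conj_conj, mul_comm]
    have key : dotProduct (star x) (((c:ℂ) • proj v).mulVec x) = (c:ℂ) * (star s * s) := by
      rw [hstar, hs]
      simp only [dotProduct, Matrix.mulVec, Matrix.smul_apply, proj, Matrix.of_apply,
        Pi.star_apply, smul_eq_mul, dotProduct]
      rw [Finset.sum_mul, Finset.mul_sum]
      refine Finset.sum_congr rfl fun i _ => ?_
      simp only [Finset.mul_sum]
      refine Finset.sum_congr rfl fun j _ => ?_
      ring
    rw [key]
    exact mul_nonneg (by exact_mod_cast hc) (star_mul_self_nonneg _)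

lemma proj_psd {n : ℕ} (v : EuclideanSpace ℂ (Fin n)) : (proj v).PosSemidef := by
  have := proj_smul_psd 1 zero_le_one v
  simpa using this

lemma ext_fin2 {α : Type*} {M N : Matrix (Fin 2) (Fin 2) α} (h00 : M 0 0 = N 0 0)
    (h01 : M 0 1 = N 0 1) (h10 : M 1 0 = N 1 0) (h11 : M 1 1 = N 1 1) : M = N := by
  ext i j
  fin_cases i <;> fin_cases j <;> first | exact h00 | exact h01 | exact h10 | exact h11

/-- the orthogonal complement vector -/
def perp (ψ : EuclideanSpace ℂ (Fin 2)) : EuclideanSpace ℂ (Fin 2) :=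
  !₂[-(starRingEnd ℂ) (ψ 1), (starRingEnd ℂ) (ψ 0)]

lemma proj_compl (ψ : EuclideanSpace ℂ (Fin 2))
    (h : ψ 0 * (starRingEnd ℂ) (ψ 0) + ψ 1 * (starRingEnd ℂ) (ψ 1) = 1) :
    (1 : Matrix (Fin 2) (Fin 2) ℂ) - proj ψ = proj (perp ψ) := by
  refine ext_fin2 ?_ ?_ ?_ ?_ <;>
    simp [proj, perp, Matrix.one_apply, Matrix.sub_apply] <;>
    first | ring1 | linear_combination -h

lemma unit_sum (ψ : EuclideanSpace ℂ (Fin 2)) (hψ : ‖ψ‖ = 1) :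
    ψ 0 * (starRingEnd ℂ) (ψ 0) + ψ 1 * (starRingEnd ℂ) (ψ 1) = 1 := by
  have h : ‖ψ 0‖^2 + ‖ψ 1‖^2 = 1 := by
    have h := EuclideanSpace.norm_eq ψ; rw [hψ] at h
    have h2 := Real.sq_sqrt (by positivity : (0:ℝ) ≤ ∑ i : Fin 2, ‖ψ i‖^2)
    rw [← h] at h2; rw [← Fin.sum_univ_two (fun i => ‖ψ i‖^2)]
    simpa using h2.symm
  rw [Complex.mul_conj, Complex.mul_conj, ← Complex.ofReal_add,
    Complex.normSq_eq_norm_sq, Complex.normSq_eq_norm_sq, h]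
  norm_num

/-- In an ontological model for `ℂ²` with `D` injective, for every unit vector `ψ` the
measure `ρ₁ = 2 · D⁻¹(½ I)` gives zero weight to the set of ontic states responding
nondeterministically to a measurement of `P_ψ`. -/
theorem rho1_deterministic {Λ : Type*} [MeasurableSpace Λ] (M : OntModel 2 Λ)
    (hinj : ∀ ρa ∈ M.C, ∀ ρb ∈ M.C, M.D ρa = M.D ρb → ρa = ρb)
    (ψ : EuclideanSpace ℂ (Fin 2)) (hψ : ‖ψ‖ = 1)
    (ρhalf : Measure Λ) (hρhalf : ρhalf ∈ M.C)
    (hDhalf : M.D ρhalf = (1 / 2 : ℂ) • 1) :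
    ((2 : ℝ≥0) • ρhalf) {l | 0 < M.p (proj ψ) l ∧ M.p (proj ψ) l < 1} = 0 := by
  have hsum := unit_sum ψ hψ
  have hPQ : (1 : Matrix (Fin 2) (Fin 2) ℂ) - proj ψ = proj (perp ψ) := proj_compl ψ hsum
  have hone : proj ψ + proj (perp ψ) = 1 := by rw [← hPQ, add_sub_cancel]
  have hPpsd : (proj ψ).PosSemidef := proj_psd ψ
  have hQpsd : (proj (perp ψ)).PosSemidef := proj_psd (perp ψ)
  have hP1 : ((1 : Matrix (Fin 2) (Fin 2) ℂ) - proj ψ).PosSemidef := hPQ ▸ hQpsd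
  have hQ1 : ((1 : Matrix (Fin 2) (Fin 2) ℂ) - proj (perp ψ)).PosSemidef := by
    have : (1 : Matrix (Fin 2) (Fin 2) ℂ) - proj (perp ψ) = proj ψ := by
      rw [← hone, add_sub_cancel_right]
    rw [this]; exact hPpsd
  have trP : (proj ψ).trace = 1 := by
    simp [proj, Matrix.trace, Fin.sum_univ_two]
    linear_combination hsum
  have trQ : (proj (perp ψ)).trace = 1 := by
    simp [proj, perp, Matrix.trace, Fin.sum_univ_two]
    linear_combination hsum
  obtain ⟨ρψ, hρψC, hDψ⟩ := M.D_surj (proj ψ) hPpsd trP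
  obtain ⟨ρφ, hρφC, hDφ⟩ := M.D_surj (proj (perp ψ)) hQpsd trQ
  haveI probψ := M.prob ρψ hρψC
  haveI probφ := M.prob ρφ hρφC
  -- integrability of response functions
  have integ : ∀ A (ρ : Measure Λ), ρ ∈ M.C → Integrable (M.p A) ρ := by
    intro A ρ hρ
    haveI := M.prob ρ hρ
    refine (integrable_const (1:ℝ)).mono' (M.p_meas A).aestronglyMeasurable ?_
    refine ae_of_all _ fun l => ?_
    rw [Real.norm_eq_abs, abs_le]
    exact ⟨by linarith [M.p_nonneg A l], by simpa using M.p_le_one A l⟩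
  -- the mixture
  set mix : Measure Λ := (1/2 : ℝ≥0) • ρψ + (1 - (1/2 : ℝ≥0)) • ρφ with hmixdef
  have hmixC : mix ∈ M.C := M.convexC ρψ hρψC ρφ hρφC (1/2) (by norm_num)
  have hhalf : (1 : ℝ≥0) - 1/2 = 1/2 := by
    refine NNReal.coe_injective ?_
    rw [NNReal.coe_sub (by norm_num)]
    norm_num
  have hintmix : ∀ A, ∫ l, M.p A l ∂mix
      = (1/2) * ∫ l, M.p A l ∂ρψ + (1/2) * ∫ l, M.p A l ∂ρφ := by
    intro A
    rw [hmixdef, hhalf,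
      show ((1/2 : ℝ≥0) • ρψ : Measure Λ) = (((1/2 : ℝ≥0) : ℝ≥0∞) • ρψ) from rfl,
      show ((1/2 : ℝ≥0) • ρφ : Measure Λ) = (((1/2 : ℝ≥0) : ℝ≥0∞) • ρφ) from rfl,
      integral_add_measure ((integ A ρψ hρψC).smul_measure ENNReal.coe_ne_top)
        ((integ A ρφ hρφC).smul_measure ENNReal.coe_ne_top),
      integral_smul_measure, integral_smul_measure]
    norm_num
  -- key trace identity for all effects
  have key : ∀ A : Matrix (Fin 2) (Fin 2) ℂ, A.PosSemidef →
      ((1 : Matrix (Fin 2) (Fin 2) ℂ) - A).PosSemidef →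
      (M.D mix * A).trace = (((1/2 : ℂ) • 1 : Matrix (Fin 2) (Fin 2) ℂ) * A).trace := by
    intro A h1 h2
    have e := M.agree mix hmixC A h1 h2
    have eψ := M.agree ρψ hρψC A h1 h2
    have eφ := M.agree ρφ hρφC A h1 h2
    rw [hDψ] at eψ
    rw [hDφ] at eφ
    rw [hintmix A] at e
    push_cast at e
    rw [eψ, eφ] at e
    rw [← e, ← hone, Matrix.smul_mul, Matrix.add_mul, Matrix.trace_smul, Matrix.trace_add,
      smul_eq_mul, mul_add]
  -- PSD facts for the four test effects
  have hv1 : ((1:ℂ) • proj (!₂[1,0] : EuclideanSpace ℂ (Fin 2))).PosSemidef := by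
    exact_mod_cast proj_smul_psd 1 zero_le_one _
  have psd1 : (proj (!₂[1,0] : EuclideanSpace ℂ (Fin 2))).PosSemidef := proj_psd _
  have psd1' : ((1 : Matrix (Fin 2) (Fin 2) ℂ) - proj (!₂[1,0] : EuclideanSpace ℂ (Fin 2))).PosSemidef := by
    rw [proj_compl _ (by norm_num)]
    exact proj_psd _
  have psd2 : (proj (!₂[0,1] : EuclideanSpace ℂ (Fin 2))).PosSemidef := proj_psd _
  have psd2' : ((1 : Matrix (Fin 2) (Fin 2) ℂ) - proj (!₂[0,1] : EuclideanSpace ℂ (Fin 2))).PosSemidef := by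
    rw [proj_compl _ (by norm_num)]
    exact proj_psd _
  have psd3 : (((1/2:ℝ):ℂ) • proj (!₂[1,1] : EuclideanSpace ℂ (Fin 2))).PosSemidef :=
    proj_smul_psd (1/2) (by norm_num) _
  have compl3 : (1 : Matrix (Fin 2) (Fin 2) ℂ) - ((1/2:ℝ):ℂ) • proj (!₂[1,1] : EuclideanSpace ℂ (Fin 2))
      = ((1/2:ℝ):ℂ) • proj (!₂[1,-1] : EuclideanSpace ℂ (Fin 2)) := by
    refine ext_fin2 ?_ ?_ ?_ ?_ <;>
      simp [proj, Matrix.one_apply, Matrix.smul_apply, Matrix.sub_apply] <;> norm_num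
  have psd3' : ((1 : Matrix (Fin 2) (Fin 2) ℂ) - ((1/2:ℝ):ℂ) • proj (!₂[1,1] : EuclideanSpace ℂ (Fin 2))).PosSemidef := by
    rw [compl3]; exact proj_smul_psd (1/2) (by norm_num) _
  have psd4 : (((1/2:ℝ):ℂ) • proj (!₂[1,-Complex.I] : EuclideanSpace ℂ (Fin 2))).PosSemidef :=
    proj_smul_psd (1/2) (by norm_num) _
  have compl4 : (1 : Matrix (Fin 2) (Fin 2) ℂ) - ((1/2:ℝ):ℂ) • proj (!₂[1,-Complex.I] : EuclideanSpace ℂ (Fin 2))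
      = ((1/2:ℝ):ℂ) • proj (!₂[1,Complex.I] : EuclideanSpace ℂ (Fin 2)) := by
    refine ext_fin2 ?_ ?_ ?_ ?_ <;>
      simp [proj, Matrix.one_apply, Matrix.smul_apply, Matrix.sub_apply, Complex.ext_iff] <;>
      norm_num
  have psd4' : ((1 : Matrix (Fin 2) (Fin 2) ℂ) - ((1/2:ℝ):ℂ) • proj (!₂[1,-Complex.I] : EuclideanSpace ℂ (Fin 2))).PosSemidef := by
    rw [compl4]; exact proj_smul_psd (1/2) (by norm_num) _
  -- determine D mix
  have e1 := key (proj !₂[1,0]) psd1 psd1'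
  have e2 := key (proj !₂[0,1]) psd2 psd2'
  have e3 := key (((1/2:ℝ):ℂ) • proj !₂[1,1]) psd3 psd3'
  have e4 := key (((1/2:ℝ):ℂ) • proj !₂[1,-Complex.I]) psd4 psd4'
  simp only [proj, Matrix.trace, Matrix.mul_apply, Fin.sum_univ_two, Matrix.smul_apply,
    Matrix.one_apply, Matrix.of_apply, Matrix.diag_apply] at e1 e2 e3 e4
  simp at e1 e2 e3 e4
  have hDmix : M.D mix = (1/2 : ℂ) • 1 := by
    refine ext_fin2 ?_ ?_ ?_ ?_ <;> simp [Matrix.smul_apply, Matrix.one_apply]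
    · linear_combination e1
    · linear_combination e3 + Complex.I * e4 - ((1+Complex.I)/2) * e1 - ((1+Complex.I)/2) * e2 + ((M.D mix 0 1 - M.D mix 1 0)/2) * Complex.I_sq
    · linear_combination e3 - Complex.I * e4 - ((1-Complex.I)/2) * e1 - ((1-Complex.I)/2) * e2 + ((M.D mix 1 0 - M.D mix 0 1)/2) * Complex.I_sq
    · linear_combination e2
  -- identify the mixture with ρhalf
  have hmixeq : mix = ρhalf := hinj mix hmixC ρhalf hρhalf (by rw [hDmix, hDhalf])
  -- deterministic response a.e. for ρψ
  have hPP : proj ψ * proj ψ = proj ψ := by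
    refine ext_fin2 ?_ ?_ ?_ ?_ <;>
      simp [proj, Matrix.mul_apply, Fin.sum_univ_two]
    · linear_combination (ψ 0 * (starRingEnd ℂ) (ψ 0)) * hsum
    · linear_combination (ψ 0 * (starRingEnd ℂ) (ψ 1)) * hsum
    · linear_combination (ψ 1 * (starRingEnd ℂ) (ψ 0)) * hsum
    · linear_combination (ψ 1 * (starRingEnd ℂ) (ψ 1)) * hsum
  have i1 : ∫ l, M.p (proj ψ) l ∂ρψ = 1 := by
    have h := M.agree ρψ hρψC (proj ψ) hPpsd hP1
    rw [hDψ, hPP, trP] at h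
    exact_mod_cast h
  have i0 : ∫ l, M.p (proj ψ) l ∂ρφ = 0 := by
    have h := M.agree ρφ hρφC (proj ψ) hPpsd hP1
    have hQP : (proj (perp ψ) * proj ψ).trace = 0 := by
      simp [proj, perp, Matrix.trace, Matrix.mul_apply, Fin.sum_univ_two]
      ring
    rw [hDφ, hQP] at h
    exact_mod_cast h
  have aeψ : ρψ {l | ¬ M.p (proj ψ) l = 1} = 0 := by
    have hint1 : Integrable (fun l => 1 - M.p (proj ψ) l) ρψ :=
      (integrable_const 1).sub (integ (proj ψ) ρψ hρψC)
    have hz : ∫ l, (1 - M.p (proj ψ) l) ∂ρψ = 0 := by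
      rw [integral_sub (integrable_const 1) (integ (proj ψ) ρψ hρψC), integral_const, i1]
      simp
    have h0 : (fun l => 1 - M.p (proj ψ) l) =ᵐ[ρψ] 0 :=
      (integral_eq_zero_iff_of_nonneg (fun l => by simpa using M.p_le_one (proj ψ) l) hint1).mp hz
    have h1 : ∀ᵐ l ∂ρψ, M.p (proj ψ) l = 1 := by
      filter_upwards [h0] with l hl
      have : 1 - M.p (proj ψ) l = 0 := hl
      linarith
    exact ae_iff.mp h1
  have aeφ : ρφ {l | ¬ M.p (proj ψ) l = 0} = 0 := by
    have h0 : (fun l => M.p (proj ψ) l) =ᵐ[ρφ] 0 :=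
      (integral_eq_zero_iff_of_nonneg (fun l => M.p_nonneg (proj ψ) l)
        (integ (proj ψ) ρφ hρφC)).mp i0
    exact ae_iff.mp h0
  -- conclude
  have hmixS : mix {l | 0 < M.p (proj ψ) l ∧ M.p (proj ψ) l < 1} = 0 := by
    rw [hmixdef, Measure.add_apply, Measure.smul_apply, Measure.smul_apply]
    have hz1 : ρψ {l | 0 < M.p (proj ψ) l ∧ M.p (proj ψ) l < 1} = 0 :=
      measure_mono_null (fun l hl => hl.2.ne) aeψ
    have hz2 : ρφ {l | 0 < M.p (proj ψ) l ∧ M.p (proj ψ) l < 1} = 0 :=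
      measure_mono_null (fun l hl => hl.1.ne') aeφ
    rw [hz1, hz2]
    simp
  rw [← hmixeq, Measure.smul_apply, hmixS]
  simp
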